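/- Let M ≥ 2, m ≥ 1, let W₁,…,W_m be i.i.d. with distribution P₁ and B₁,…,B_m i.i.d. with distribution P₂ (all independent), and set A_i := (2π σ̂(1))^{-1} Re(f̂(W_i) e^{-i B_i}) / (p₁(W_i) p₂(B_i)). Let f₁(x) := ∫_{{‖ω‖₁ ≤ M}} ∫_{{|b| ≤ 2M}} (2π σ̂(1))^{-1} σ(ω·x+b) Re(f̂(ω) e^{-ib}) db dω. Then there is a constant C > 0 depending only on σ such that 𝔼[ ∫_Ω ( f₁(x) − (1/m) Σ_{i=1}^m A_i σ(W_i·x + B_i) )² dx ] ≤ (C/m) · C_d M^{d+1} · ‖f̂‖_{L^∞(ℝ^d)} · ∫_{ℝ^d} (1+‖ω‖₁) |f̂(ω)| dω. -/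

import Mathlib

open MeasureTheory
open scoped ENNReal Pointwise

set_option maxHeartbeats 1000000

/-- The ℓ¹-norm of a vector in `ℝ^d`. -/
noncomputable def l1norm {d : ℕ} (ω : Fin d → ℝ) : ℝ := ∑ i, |ω i|

/-- The Euclidean inner product on `ℝ^d`. -/
noncomputable def dotp {d : ℕ} (ω x : Fin d → ℝ) : ℝ := ∑ i, ω i * x i

/-- The compactly supported `ReLU³`-difference activation. -/
noncomputable def act (t : ℝ) : ℝ :=
  ∑ i ∈ Finset.range 5, (-1 : ℝ) ^ i * (Nat.choose 4 i : ℝ) * max 0 (t + 2 - i) ^ 3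

/-- `C_d`: the Lebesgue volume of the unit `ℓ¹`-ball in `ℝ^d`. -/
noncomputable def Cvol (d : ℕ) : ℝ := (volume {ω : Fin d → ℝ | l1norm ω ≤ 1}).toReal

/-- `P₁`: the uniform probability distribution on `{ω : ‖ω‖₁ ≤ M}`
(with density `1/(C_d M^d)`). -/
noncomputable def P1unif (d : ℕ) (M : ℝ) : Measure (Fin d → ℝ) :=
  (ENNReal.ofReal (Cvol d * M ^ d))⁻¹ • volume.restrict {ω : Fin d → ℝ | l1norm ω ≤ M}

/-- `P₂`: the uniform probability distribution on `{b : |b| ≤ 2M}`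
(with density `1/(4M)`). -/
noncomputable def P2unif (M : ℝ) : Measure ℝ :=
  (ENNReal.ofReal (4 * M))⁻¹ • volume.restrict {b : ℝ | |b| ≤ 2 * M}






lemma act_eq (t : ℝ) : act t = max 0 (t+2) ^ 3 - 4 * max 0 (t+1) ^ 3 + 6 * max 0 t ^ 3
    - 4 * max 0 (t-1) ^ 3 + max 0 (t-2) ^ 3 := by
  simp only [act, Finset.sum_range_succ, Finset.sum_range_zero]
  norm_num [Nat.choose]
  ring

lemma act_of_le (t : ℝ) (h : t ≤ -2) : act t = 0 := by
  rw [act_eq, max_eq_left (by linarith), max_eq_left (by linarith), max_eq_left (by linarith),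
    max_eq_left (by linarith), max_eq_left (by linarith)]
  ring

lemma act_of_ge (t : ℝ) (h : 2 ≤ t) : act t = 0 := by
  rw [act_eq, max_eq_right (by linarith), max_eq_right (by linarith), max_eq_right (by linarith),
    max_eq_right (by linarith), max_eq_right (by linarith)]
  ring

lemma act_zero_of_abs (t : ℝ) (h : 2 ≤ |t|) : act t = 0 := by
  rcases abs_cases t with ⟨he, _⟩ | ⟨he, _⟩
  · exact act_of_ge t (he ▸ h)
  · exact act_of_le t (by linarith [he ▸ h])

lemma abs_act_le (t : ℝ) : |act t| ≤ 1024 := by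
  rcases le_or_gt t 2 with h | h
  · rw [act_eq, abs_le]
    have h1 : 0 ≤ max 0 (t+2) := le_max_left _ _
    have h2 : max 0 (t+2) ≤ 4 := max_le (by norm_num) (by linarith)
    have h3 : 0 ≤ max 0 (t+1) := le_max_left _ _
    have h4 : max 0 (t+1) ≤ 4 := max_le (by norm_num) (by linarith)
    have h5 : 0 ≤ max 0 t := le_max_left _ _
    have h6 : max 0 t ≤ 4 := max_le (by norm_num) (by linarith)
    have h7 : 0 ≤ max 0 (t-1) := le_max_left _ _
    have h8 : max 0 (t-1) ≤ 4 := max_le (by norm_num) (by linarith)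
    have h9 : 0 ≤ max 0 (t-2) := le_max_left _ _
    have h10 : max 0 (t-2) ≤ 4 := max_le (by norm_num) (by linarith)
    constructor <;> nlinarith [pow_le_pow_left₀ h1 h2 3, pow_le_pow_left₀ h3 h4 3,
      pow_le_pow_left₀ h5 h6 3, pow_le_pow_left₀ h7 h8 3, pow_le_pow_left₀ h9 h10 3,
      pow_nonneg h1 3, pow_nonneg h3 3, pow_nonneg h5 3, pow_nonneg h7 3, pow_nonneg h9 3]
  · rw [act_of_ge t h.le]; norm_num

lemma act_continuous : Continuous act := by
  unfold act
  exact continuous_finset_sum _ fun i _ => by fun_prop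

section MeasureHelpers
variable {α β : Type*} [MeasurableSpace α] [MeasurableSpace β]


lemma my_smul_prod (μ : Measure α) (ν : Measure β) (c : ℝ≥0∞) [SFinite μ] [SFinite ν] :
    (c • μ).prod ν = c • (μ.prod ν) := by
  ext s hs
  rw [Measure.smul_apply, Measure.prod_apply hs, Measure.prod_apply hs,
    lintegral_smul_measure]

lemma my_prod_smul (μ : Measure α) (ν : Measure β) (c : ℝ≥0∞) (hc : c ≠ ⊤)
    [SFinite μ] [SFinite ν] :
    μ.prod (c • ν) = c • (μ.prod ν) := by
  ext s hs
  rw [Measure.smul_apply, Measure.prod_apply hs, Measure.prod_apply hs, smul_eq_mul,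
    ← lintegral_const_mul' _ _ hc]
  simp

lemma my_pi_map_eval {m : ℕ} (ν : Measure α) [IsProbabilityMeasure ν] (i : Fin m) :
    (Measure.pi fun _ : Fin m => ν).map (Function.eval i) = ν := by
  ext s hs
  rw [Measure.map_apply (measurable_pi_apply i) hs, Set.eval_preimage, Measure.pi_pi]
  have : ∀ k : Fin m, ν (Function.update (fun _ => Set.univ) i s k) =
      if k = i then ν s else 1 := by
    intro k
    rcases eq_or_ne k i with rfl | hk
    · simp
    · simp [Function.update, hk]
  simp_rw [this]
  simp [Finset.prod_ite_eq']

lemma my_pi_map_pair {m : ℕ} (ν : Measure α) [IsProbabilityMeasure ν] (i j : Fin m)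
    (hij : i ≠ j) :
    (Measure.pi fun _ : Fin m => ν).map (fun q => (q i, q j)) = ν.prod ν := by
  refine (Measure.prod_eq fun s t hs ht => ?_).symm
  rw [Measure.map_apply (by exact (measurable_pi_apply i).prodMk (measurable_pi_apply j))
    (hs.prod ht)]
  have hpre : (fun q : Fin m → α => (q i, q j)) ⁻¹' (s ×ˢ t) =
      Set.pi Set.univ (Function.update (Function.update (fun _ => Set.univ) i s) j t) := by
    ext q
    simp only [Set.mem_preimage, Set.mem_prod, Set.mem_pi, Set.mem_univ, forall_true_left]
    constructor
    · rintro ⟨h1, h2⟩ k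
      rcases eq_or_ne k j with rfl | hkj
      · simpa [Function.update] using h2
      · rcases eq_or_ne k i with rfl | hki
        · simp [Function.update, hij, h1]
        · simp [Function.update, hkj, hki]
    · intro h
      refine ⟨?_, ?_⟩
      · have := h i; simpa [Function.update, hij] using this
      · have := h j; simpa [Function.update] using this
  rw [hpre, Measure.pi_pi]
  have : ∀ k : Fin m, ν (Function.update (Function.update (fun _ => Set.univ) i s) j t k) =
      (if k = i then ν s else 1) * (if k = j then ν t else 1) := by
    intro k
    rcases eq_or_ne k j with rfl | hkj
    · simp [Function.update, hij.symm]
    · rcases eq_or_ne k i with rfl | hki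
      · simp [Function.update, hij, hkj]
      · simp [Function.update, hkj, hki]
  simp_rw [this]
  rw [Finset.prod_mul_distrib]
  simp [Finset.prod_ite_eq']




variable {m : ℕ} {ν : Measure α} [IsProbabilityMeasure ν] {g : α → ℝ}

lemma mc_int_eval (hgm : Measurable g) (hg1 : Integrable g ν) (i : Fin m) :
    Integrable (fun q : Fin m → α => g (q i)) (Measure.pi fun _ : Fin m => ν) := by
  have h := hg1
  rw [← my_pi_map_eval ν i] at h
  exact (integrable_map_measure hgm.aestronglyMeasurable
    (measurable_pi_apply i).aemeasurable).mp h

lemma mc_integral_eval (hgm : Measurable g) (i : Fin m) :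
    ∫ q, g (q i) ∂(Measure.pi fun _ : Fin m => ν) = ∫ y, g y ∂ν := by
  conv_rhs => rw [← my_pi_map_eval ν i]
  rw [integral_map (measurable_pi_apply i).aemeasurable
    (by rw [my_pi_map_eval ν i]; exact hgm.aestronglyMeasurable)]

lemma mc_int_pair (hgm : Measurable g) (hg1 : Integrable g ν)
    (hg2 : Integrable (fun y => g y ^ 2) ν) (i j : Fin m) :
    Integrable (fun q : Fin m → α => g (q i) * g (q j)) (Measure.pi fun _ : Fin m => ν) := by
  rcases eq_or_ne i j with rfl | hij
  · have : (fun q : Fin m → α => g (q i) * g (q i)) = fun q => (fun y => g y ^ 2) (q i) := by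
      funext q; ring
    rw [this]
    exact mc_int_eval (hgm.pow_const 2) hg2 i
  · have hint : Integrable (fun z : α × α => g z.1 * g z.2) (ν.prod ν) := hg1.mul_prod hg1
    rw [← my_pi_map_pair ν i j hij] at hint
    exact (integrable_map_measure
      ((hgm.comp measurable_fst).mul (hgm.comp measurable_snd)).aestronglyMeasurable
      ((measurable_pi_apply i).prodMk (measurable_pi_apply j)).aemeasurable).mp hint

lemma mc_integral_pair (hgm : Measurable g) (i j : Fin m) (hij : i ≠ j) :
    ∫ q, g (q i) * g (q j) ∂(Measure.pi fun _ : Fin m => ν)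
      = (∫ y, g y ∂ν) * (∫ y, g y ∂ν) := by
  have : ∫ q, g (q i) * g (q j) ∂(Measure.pi fun _ : Fin m => ν)
      = ∫ z : α × α, g z.1 * g z.2 ∂(ν.prod ν) := by
    rw [← my_pi_map_pair ν i j hij,
      integral_map ((measurable_pi_apply i).prodMk (measurable_pi_apply j)).aemeasurable
      (by rw [my_pi_map_pair ν i j hij]
          exact ((hgm.comp measurable_fst).mul (hgm.comp measurable_snd)).aestronglyMeasurable)]
  rw [this, integral_prod_mul]

lemma mc_integral_pair_self (hgm : Measurable g) (i : Fin m) :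
    ∫ q, g (q i) * g (q i) ∂(Measure.pi fun _ : Fin m => ν) = ∫ y, g y ^ 2 ∂ν := by
  have h : (fun q : Fin m → α => g (q i) * g (q i)) = fun q => (fun y => g y ^ 2) (q i) := by
    funext q; ring
  rw [h, mc_integral_eval (hgm.pow_const 2) i]

lemma mc_key (hgm : Measurable g) (hg1 : Integrable g ν)
    (hg2 : Integrable (fun y => g y ^ 2) ν) (hm : 1 ≤ m) :
    (Integrable (fun q : Fin m → α => ((∫ y, g y ∂ν) - (1/(m:ℝ)) * ∑ i : Fin m, g (q i)) ^ 2)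
      (Measure.pi fun _ : Fin m => ν)) ∧
    ∫ q, ((∫ y, g y ∂ν) - (1/(m:ℝ)) * ∑ i : Fin m, g (q i)) ^ 2
        ∂(Measure.pi fun _ : Fin m => ν)
      ≤ (1/(m:ℝ)) * ∫ y, g y ^ 2 ∂ν := by
  set π := Measure.pi fun _ : Fin m => ν with hπ
  set a := ∫ y, g y ∂ν with ha
  set V := ∫ y, g y ^ 2 ∂ν with hV
  have hm0 : (0:ℝ) < m := by exact_mod_cast Nat.lt_of_lt_of_le Nat.zero_lt_one hm
  have hexp : (fun q : Fin m → α => (a - (1/(m:ℝ)) * ∑ i : Fin m, g (q i)) ^ 2)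
      = fun q => (a^2 - (2*a/m) * (∑ i : Fin m, g (q i)))
        + (1/(m:ℝ))^2 * ∑ i : Fin m, ∑ j : Fin m, g (q i) * g (q j) := by
    funext q
    rw [← Finset.sum_mul_sum]
    field_simp
    ring
  have hsum_int : Integrable (fun q : Fin m → α => ∑ i : Fin m, g (q i)) π :=
    integrable_finset_sum _ fun i _ => mc_int_eval hgm hg1 i
  have hsumsq_int : Integrable
      (fun q : Fin m → α => ∑ i : Fin m, ∑ j : Fin m, g (q i) * g (q j)) π :=
    integrable_finset_sum _ fun i _ => integrable_finset_sum _ fun j _ =>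
      mc_int_pair hgm hg1 hg2 i j
  have hA_int : Integrable (fun q : Fin m → α =>
      a^2 - (2*a/m) * (∑ i : Fin m, g (q i))) π :=
    (integrable_const _).sub (hsum_int.const_mul _)
  have hB_int : Integrable (fun q : Fin m → α =>
      (1/(m:ℝ))^2 * ∑ i : Fin m, ∑ j : Fin m, g (q i) * g (q j)) π :=
    hsumsq_int.const_mul _
  have hint : Integrable (fun q : Fin m → α =>
      (a - (1/(m:ℝ)) * ∑ i : Fin m, g (q i)) ^ 2) π := by
    rw [hexp]; exact hA_int.add hB_int
  refine ⟨hint, ?_⟩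
  have h1 : ∫ q, (∑ i : Fin m, g (q i)) ∂π = m * a := by
    rw [integral_finset_sum _ (fun i _ => mc_int_eval hgm hg1 i)]
    simp_rw [mc_integral_eval hgm]
    simp [← ha, mul_comm]
  have h2 : ∫ q, (∑ i : Fin m, ∑ j : Fin m, g (q i) * g (q j)) ∂π
      = m*V + (m*m - m) * a^2 := by
    rw [integral_finset_sum _ (fun i _ => integrable_finset_sum _ fun j _ =>
      mc_int_pair hgm hg1 hg2 i j)]
    have hrw : ∀ i : Fin m, ∫ q, (∑ j : Fin m, g (q i) * g (q j)) ∂π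
        = ∑ j : Fin m, ∫ q, g (q i) * g (q j) ∂π := fun i =>
      integral_finset_sum _ (fun j _ => mc_int_pair hgm hg1 hg2 i j)
    rw [← hπ]
    simp_rw [hrw]
    have hij : ∀ i j : Fin m, ∫ q, g (q i) * g (q j) ∂π
        = a^2 + if i = j then V - a^2 else 0 := by
      intro i j
      rcases eq_or_ne i j with rfl | hij
      · rw [mc_integral_pair_self hgm]; simp [← hV, ← ha]
      · rw [mc_integral_pair hgm i j hij]; simp [hij, ← ha, sq]
    simp_rw [hij]
    rw [Finset.sum_congr rfl (fun i _ => Finset.sum_add_distrib)]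
    simp [Finset.sum_ite_eq, Finset.card_univ]
    ring
  have hval : ∫ q, ((a - (1/(m:ℝ)) * ∑ i : Fin m, g (q i)) ^ 2) ∂π
      = a^2 - (2*a/m) * (m*a) + (1/(m:ℝ))^2 * (m*V + (m*m - m) * a^2) := by
    rw [hexp, integral_add hA_int hB_int, integral_sub (integrable_const _)
      (hsum_int.const_mul _), integral_const_mul, integral_const_mul, h1, h2]
    simp [measure_univ]
  rw [hval]
  have ha2 : 0 ≤ a^2 := sq_nonneg a
  have heq : a^2 - (2*a/m) * (m*a) + (1/(m:ℝ))^2 * (m*V + (m*m - m) * a^2)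
      = (1/(m:ℝ)) * V - (1/(m:ℝ)) * a^2 := by
    field_simp
    ring
  rw [heq]
  nlinarith [mul_pos (one_div_pos.mpr hm0) hm0, mul_nonneg (le_of_lt (one_div_pos.mpr hm0)) ha2]

end MeasureHelpers






lemma l1norm_nonneg {d : ℕ} (ω : Fin d → ℝ) : 0 ≤ l1norm ω :=
  Finset.sum_nonneg fun i _ => abs_nonneg _

lemma l1norm_continuous {d : ℕ} : Continuous (l1norm (d := d)) := by
  unfold l1norm; fun_prop

lemma l1ball_measurable {d : ℕ} (M : ℝ) : MeasurableSet {ω : Fin d → ℝ | l1norm ω ≤ M} :=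
  (isClosed_le l1norm_continuous continuous_const).measurableSet

lemma l1norm_smul {d : ℕ} (c : ℝ) (ω : Fin d → ℝ) : l1norm (c • ω) = |c| * l1norm ω := by
  unfold l1norm
  rw [Finset.mul_sum]
  exact Finset.sum_congr rfl fun i _ => by simp [abs_mul]

lemma volume_l1ball_lt_top {d : ℕ} : volume {ω : Fin d → ℝ | l1norm ω ≤ 1} < ⊤ := by
  have hsub : {ω : Fin d → ℝ | l1norm ω ≤ 1} ⊆ Set.pi Set.univ fun _ => Set.Icc (-1 : ℝ) 1 := by
    intro ω hω
    intro i _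
    have h1 : |ω i| ≤ l1norm ω := by
      unfold l1norm
      exact Finset.single_le_sum (fun j _ => abs_nonneg (ω j)) (Finset.mem_univ i)
    have := le_trans h1 hω
    exact abs_le.mp this
  calc volume {ω : Fin d → ℝ | l1norm ω ≤ 1}
      ≤ volume (Set.pi Set.univ fun _ : Fin d => Set.Icc (-1 : ℝ) 1) := measure_mono hsub
    _ = ∏ _i : Fin d, volume (Set.Icc (-1 : ℝ) 1) := volume_pi_pi _
    _ < ⊤ := by simp [Real.volume_Icc]

lemma volume_l1ball_pos {d : ℕ} (hd : 1 ≤ d) : 0 < volume {ω : Fin d → ℝ | l1norm ω ≤ 1} := by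
  have hd0 : (0:ℝ) < d := by exact_mod_cast hd
  have hsub : Set.pi Set.univ (fun _ : Fin d => Set.Icc (0:ℝ) (1/d))
      ⊆ {ω : Fin d → ℝ | l1norm ω ≤ 1} := by
    intro ω hω
    have h1 : l1norm ω ≤ ∑ _i : Fin d, (1:ℝ)/d := by
      apply Finset.sum_le_sum
      intro i _
      have := hω i (Set.mem_univ i)
      rw [abs_of_nonneg this.1]
      exact this.2
    have h2 : ∑ _i : Fin d, (1:ℝ)/d = 1 := by
      rw [Finset.sum_const, Finset.card_univ, Fintype.card_fin, nsmul_eq_mul, mul_one_div,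
        div_self (ne_of_gt hd0)]
    exact le_of_le_of_eq h1 h2
  refine lt_of_lt_of_le ?_ (measure_mono hsub)
  rw [volume_pi_pi]
  simp only [Real.volume_Icc, sub_zero]
  rw [Finset.prod_const]
  exact ENNReal.pow_pos (ENNReal.ofReal_pos.mpr (by positivity)) _

lemma Cvol_pos {d : ℕ} (hd : 1 ≤ d) : 0 < Cvol d :=
  ENNReal.toReal_pos (ne_of_gt (volume_l1ball_pos hd)) (ne_of_lt volume_l1ball_lt_top)

lemma volume_l1ball_scaled {d : ℕ} (hd : 1 ≤ d) {M : ℝ} (hM : 0 < M) :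
    volume {ω : Fin d → ℝ | l1norm ω ≤ M} = ENNReal.ofReal (Cvol d * M ^ d) := by
  have hset : {ω : Fin d → ℝ | l1norm ω ≤ M} = M • {ω : Fin d → ℝ | l1norm ω ≤ 1} := by
    ext ω
    rw [Set.mem_smul_set_iff_inv_smul_mem₀ (ne_of_gt hM)]
    simp only [Set.mem_setOf_eq, l1norm_smul, abs_of_pos (inv_pos.mpr hM)]
    rw [inv_mul_le_iff₀ hM, mul_one]
  rw [hset, Measure.addHaar_smul, Module.finrank_fintype_fun_eq_card, Fintype.card_fin,
    abs_of_pos (pow_pos hM d), mul_comm (Cvol d) (M ^ d),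
    ENNReal.ofReal_mul (le_of_lt (pow_pos hM d)), Cvol,
    ENNReal.ofReal_toReal (ne_of_lt volume_l1ball_lt_top)]

lemma volume_bball {M : ℝ} (hM : 0 < M) :
    volume {b : ℝ | |b| ≤ 2 * M} = ENNReal.ofReal (4 * M) := by
  have : {b : ℝ | |b| ≤ 2 * M} = Set.Icc (-(2*M)) (2*M) := by
    ext b; simp [abs_le]
  rw [this, Real.volume_Icc]
  norm_num
  ring_nf
  rw [ENNReal.ofReal_mul' (by norm_num), ENNReal.ofReal_ofNat]

lemma P1unif_prob {d : ℕ} (hd : 1 ≤ d) {M : ℝ} (hM : 0 < M) :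
    IsProbabilityMeasure (P1unif d M) := by
  constructor
  rw [P1unif, Measure.smul_apply, Measure.restrict_apply_univ, volume_l1ball_scaled hd hM,
    smul_eq_mul]
  exact ENNReal.inv_mul_cancel
    (ne_of_gt (ENNReal.ofReal_pos.mpr (mul_pos (Cvol_pos hd) (pow_pos hM d))))
    ENNReal.ofReal_ne_top

lemma P2unif_prob {M : ℝ} (hM : 0 < M) : IsProbabilityMeasure (P2unif M) := by
  constructor
  rw [P2unif, Measure.smul_apply, Measure.restrict_apply_univ, volume_bball hM, smul_eq_mul]
  exact ENNReal.inv_mul_cancel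
    (ne_of_gt (ENNReal.ofReal_pos.mpr (by positivity))) ENNReal.ofReal_ne_top
lemma act_sq_integrable (u : ℝ) : Integrable (fun b : ℝ => act (u + b) ^ 2) := by
  apply Continuous.integrable_of_hasCompactSupport
  · exact ((act_continuous.comp (continuous_const.add continuous_id)).pow 2)
  · apply HasCompactSupport.intro (isCompact_Icc (a := -2 - u) (b := 2 - u))
    intro b hb
    have : 2 ≤ |u + b| := by
      simp only [Set.mem_Icc, not_and_or, not_le] at hb
      rcases hb with h | h
      · rw [abs_of_nonpos (by linarith)]; linarith
      · rw [abs_of_nonneg (by linarith)]; linarith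
    rw [act_zero_of_abs _ this]
    norm_num

lemma act_sq_integral_le (u : ℝ) : ∫ b : ℝ, act (u + b) ^ 2 ≤ 4194304 := by
  have hind_int : Integrable (Set.indicator (Set.Icc (-2 - u) (2 - u))
      fun _ => (1048576 : ℝ)) := by
    rw [integrable_indicator_iff measurableSet_Icc]
    exact integrableOn_const (by rw [Real.volume_Icc]; exact ENNReal.ofReal_ne_top)
  have hpt : ∀ b : ℝ, act (u + b) ^ 2
      ≤ Set.indicator (Set.Icc (-2 - u) (2 - u)) (fun _ => (1048576 : ℝ)) b := by
    intro b
    by_cases hmem : b ∈ Set.Icc (-2 - u) (2 - u)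
    · rw [Set.indicator_of_mem hmem]
      have h1 := abs_act_le (u + b)
      calc act (u + b) ^ 2 = |act (u + b)| ^ 2 := (sq_abs _).symm
        _ ≤ 1024 ^ 2 := pow_le_pow_left₀ (abs_nonneg _) h1 2
        _ = 1048576 := by norm_num
    · rw [Set.indicator_of_notMem hmem]
      have : 2 ≤ |u + b| := by
        simp only [Set.mem_Icc, not_and_or, not_le] at hmem
        rcases hmem with h | h
        · rw [abs_of_nonpos (by linarith)]; linarith
        · rw [abs_of_nonneg (by linarith)]; linarith
      rw [act_zero_of_abs _ this]
      norm_num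
  calc ∫ b : ℝ, act (u + b) ^ 2
      ≤ ∫ b : ℝ, Set.indicator (Set.Icc (-2 - u) (2 - u)) (fun _ => (1048576 : ℝ)) b :=
        integral_mono (act_sq_integrable u) hind_int hpt
    _ = (volume (Set.Icc (-2 - u) (2 - u))).toReal • (1048576 : ℝ) :=
        integral_indicator_const _ measurableSet_Icc
    _ = 4194304 := by
        rw [Real.volume_Icc, show (2 - u) - (-2 - u) = (4:ℝ) by ring,
          ENNReal.toReal_ofReal (by norm_num), smul_eq_mul]
        norm_num

lemma act_sq_setint_le (u : ℝ) (S : Set ℝ) : ∫ b in S, act (u + b) ^ 2 ≤ 4194304 :=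
  le_trans (setIntegral_le_integral (act_sq_integrable u)
    (Filter.Eventually.of_forall fun b => sq_nonneg _)) (act_sq_integral_le u)

lemma helper_ofReal_integral_le {α : Type*} [MeasurableSpace α] (μ : Measure α) (f : α → ℝ)
    (hf : 0 ≤ᵐ[μ] f) :
    ENNReal.ofReal (∫ a, f a ∂μ) ≤ ∫⁻ a, ENNReal.ofReal (f a) ∂μ := by
  by_cases hi : Integrable f μ
  · rw [ofReal_integral_eq_lintegral_ofReal hi hf]
  · rw [integral_undef hi]; simp

lemma helper_integral_le_toReal {α : Type*} [MeasurableSpace α] (μ : Measure α) (f : α → ℝ)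
    (hf : 0 ≤ᵐ[μ] f) :
    ∫ a, f a ∂μ ≤ (∫⁻ a, ENNReal.ofReal (f a) ∂μ).toReal := by
  by_cases hi : Integrable f μ
  · rw [integral_eq_lintegral_of_nonneg_ae hf hi.aestronglyMeasurable]
  · rw [integral_undef hi]; exact ENNReal.toReal_nonneg
noncomputable def S1 (d : ℕ) (M : ℝ) : Set (Fin d → ℝ) := {ω | l1norm ω ≤ M}
noncomputable def S2 (M : ℝ) : Set ℝ := {b : ℝ | |b| ≤ 2 * M}
noncomputable def rho (d : ℕ) (M : ℝ) : Measure ((Fin d → ℝ) × ℝ) :=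
  (volume.restrict (S1 d M)).prod (volume.restrict (S2 M))
noncomputable def nu (d : ℕ) (M : ℝ) : Measure ((Fin d → ℝ) × ℝ) :=
  (P1unif d M).prod (P2unif M)
noncomputable def hfun {d : ℕ} (σhat : ℝ) (fhat : (Fin d → ℝ) → ℂ) (x : Fin d → ℝ)
    (z : (Fin d → ℝ) × ℝ) : ℝ :=
  (2 * Real.pi * σhat)⁻¹ * act (dotp z.1 x + z.2) *
    (fhat z.1 * Complex.exp (-(Complex.I * z.2))).re
noncomputable def gfun {d : ℕ} (σhat : ℝ) (fhat : (Fin d → ℝ) → ℂ) (M : ℝ) (x : Fin d → ℝ)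
    (z : (Fin d → ℝ) × ℝ) : ℝ :=
  ((2 * Real.pi * σhat)⁻¹ * (fhat z.1 * Complex.exp (-(Complex.I * z.2))).re *
    ((Cvol d * M ^ d) * (4 * M))) * act (dotp z.1 x + z.2)

section Sample

variable {d : ℕ} {M : ℝ} (σhat : ℝ) {fhat : (Fin d → ℝ) → ℂ}

lemma S1_measurable : MeasurableSet (S1 d M) := l1ball_measurable M

lemma S2_measurable : MeasurableSet (S2 M) :=
  (isClosed_le (continuous_abs) continuous_const).measurableSet

lemma S2_finite (hM : 0 < M) : IsFiniteMeasure (volume.restrict (S2 M)) := by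
  constructor
  rw [Measure.restrict_apply_univ, S2, volume_bball hM]
  exact ENNReal.ofReal_lt_top

lemma S1_finite (hd : 1 ≤ d) (hM : 0 < M) : IsFiniteMeasure (volume.restrict (S1 d M)) := by
  constructor
  rw [Measure.restrict_apply_univ, S1, volume_l1ball_scaled hd hM]
  exact ENNReal.ofReal_lt_top

lemma measurable_repart (hfm : Measurable fhat) :
    Measurable fun z : (Fin d → ℝ) × ℝ => (fhat z.1 * Complex.exp (-(Complex.I * z.2))).re := by
  apply Complex.measurable_re.comp
  apply Measurable.mul (hfm.comp measurable_fst)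
  have : Continuous fun b : ℝ => Complex.exp (-(Complex.I * b)) := by
    apply Complex.continuous_exp.comp
    exact (continuous_const.mul Complex.continuous_ofReal).neg
  exact this.measurable.comp measurable_snd

lemma measurable_actpart (x : Fin d → ℝ) :
    Measurable fun z : (Fin d → ℝ) × ℝ => act (dotp z.1 x + z.2) := by
  apply act_continuous.measurable.comp
  apply Measurable.add _ measurable_snd
  unfold dotp
  exact Finset.measurable_sum _ fun i _ =>
    ((measurable_pi_apply i).comp measurable_fst).mul_const _

lemma measurable_hfun (hfm : Measurable fhat) (x : Fin d → ℝ) :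
    Measurable (hfun σhat fhat x) := by
  unfold hfun
  exact (measurable_const.mul (measurable_actpart x)).mul (measurable_repart hfm)

lemma measurable_gfun (hfm : Measurable fhat) (x : Fin d → ℝ) :
    Measurable (gfun σhat fhat M x) := by
  unfold gfun
  exact ((measurable_const.mul (measurable_repart hfm)).mul_const _).mul (measurable_actpart x)

lemma repart_abs_le (z : (Fin d → ℝ) × ℝ) :
    |(fhat z.1 * Complex.exp (-(Complex.I * z.2))).re| ≤ ‖fhat z.1‖ := by
  calc |(fhat z.1 * Complex.exp (-(Complex.I * z.2))).re|
      ≤ ‖fhat z.1 * Complex.exp (-(Complex.I * z.2))‖ := Complex.abs_re_le_norm _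
    _ = ‖fhat z.1‖ * ‖Complex.exp (-(Complex.I * z.2))‖ := norm_mul _ _
    _ = ‖fhat z.1‖ := by
        rw [Complex.norm_exp]
        simp

lemma gfun_eq_hfun (x : Fin d → ℝ) (z : (Fin d → ℝ) × ℝ) :
    gfun σhat fhat M x z = ((Cvol d * M ^ d) * (4 * M)) * hfun σhat fhat x z := by
  unfold gfun hfun; ring

end Sample
section Sample2

variable {d : ℕ} {M : ℝ} (σhat : ℝ) {fhat : (Fin d → ℝ) → ℂ}

lemma kappa_pos (hd : 1 ≤ d) (hM : 0 < M) : 0 < (Cvol d * M ^ d) * (4 * M) := by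
  have := Cvol_pos hd
  positivity

lemma nu_eq (hd : 1 ≤ d) (hM : 0 < M) :
    nu d M = (ENNReal.ofReal ((Cvol d * M ^ d) * (4 * M)))⁻¹ • rho d M := by
  have h1 : (0:ℝ) < Cvol d * M ^ d := by have := Cvol_pos hd; positivity
  have h2 : (0:ℝ) < 4 * M := by positivity
  unfold nu rho P1unif P2unif
  rw [show ({b : ℝ | |b| ≤ 2 * M}) = S2 M from rfl,
      show ({ω : Fin d → ℝ | l1norm ω ≤ M}) = S1 d M from rfl]
  rw [my_smul_prod, my_prod_smul _ _ _
    (ENNReal.inv_ne_top.mpr (ne_of_gt (ENNReal.ofReal_pos.mpr h2))), smul_smul]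
  congr 1
  rw [ENNReal.ofReal_mul (le_of_lt h1), ENNReal.mul_inv
    (Or.inl (ne_of_gt (ENNReal.ofReal_pos.mpr h1))) (Or.inl ENNReal.ofReal_ne_top)]

lemma integral_nu_eq (hd : 1 ≤ d) (hM : 0 < M) (f : (Fin d → ℝ) × ℝ → ℝ) :
    ∫ z, f z ∂(nu d M) = ((Cvol d * M ^ d) * (4 * M))⁻¹ * ∫ z, f z ∂(rho d M) := by
  rw [nu_eq hd hM, integral_smul_measure, ENNReal.toReal_inv,
    ENNReal.toReal_ofReal (le_of_lt (kappa_pos hd hM)), smul_eq_mul]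

lemma habs_int_S1 (hfm : Measurable fhat)
    (hfint : Integrable (fun ω : Fin d → ℝ => (1 + l1norm ω) * ‖fhat ω‖)) :
    IntegrableOn (fun ω => ‖fhat ω‖) (S1 d M) volume := by
  apply Integrable.mono' hfint.integrableOn
    (show Measurable fun ω : Fin d → ℝ => ‖fhat ω‖ from
      continuous_norm.measurable.comp hfm).aestronglyMeasurable
  apply Filter.Eventually.of_forall
  intro ω
  rw [Real.norm_of_nonneg (norm_nonneg _)]
  exact le_mul_of_one_le_left (norm_nonneg _) (by linarith [l1norm_nonneg ω])

lemma base_int_rho (hd : 1 ≤ d) (hM : 0 < M) (hfm : Measurable fhat)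
    (hfint : Integrable (fun ω : Fin d → ℝ => (1 + l1norm ω) * ‖fhat ω‖)) :
    Integrable (fun z : (Fin d → ℝ) × ℝ => ‖fhat z.1‖) (rho d M) := by
  haveI := S2_finite hM
  have h : Integrable (fun z : (Fin d → ℝ) × ℝ => ‖fhat z.1‖ * 1)
      ((volume.restrict (S1 d M)).prod (volume.restrict (S2 M))) :=
    (habs_int_S1 hfm hfint).mul_prod (integrable_const (1:ℝ))
  unfold rho
  simpa using h

lemma hfun_abs_le (x : Fin d → ℝ) (z : (Fin d → ℝ) × ℝ) :
    |hfun σhat fhat x z| ≤ |(2 * Real.pi * σhat)⁻¹| * 1024 * ‖fhat z.1‖ := by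
  unfold hfun
  rw [abs_mul, abs_mul]
  apply mul_le_mul
  · exact mul_le_mul_of_nonneg_left (abs_act_le _) (abs_nonneg _)
  · exact repart_abs_le z
  · exact abs_nonneg _
  · positivity

lemma hfun_int (hd : 1 ≤ d) (hM : 0 < M) (hfm : Measurable fhat)
    (hfint : Integrable (fun ω : Fin d → ℝ => (1 + l1norm ω) * ‖fhat ω‖))
    (x : Fin d → ℝ) :
    Integrable (hfun σhat fhat x) (rho d M) := by
  apply Integrable.mono' ((base_int_rho hd hM hfm hfint).const_mul
    (|(2 * Real.pi * σhat)⁻¹| * 1024)) (measurable_hfun σhat hfm x).aestronglyMeasurable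
  exact Filter.Eventually.of_forall fun z => by
    rw [Real.norm_eq_abs]; exact hfun_abs_le σhat x z

lemma hE_vol (hfmem : MemLp fhat ⊤ volume) :
    ∀ᵐ ω ∂(volume : Measure (Fin d → ℝ)),
      ‖fhat ω‖ ≤ (eLpNorm fhat ⊤ volume).toReal := by
  have h2 : eLpNormEssSup fhat volume ≠ ⊤ := by
    have := hfmem.2
    rw [eLpNorm_exponent_top] at this
    exact this.ne
  filter_upwards [ae_le_eLpNormEssSup (f := fhat) (μ := volume)] with ω hω
  have := ENNReal.toReal_mono h2 hω
  rw [eLpNorm_exponent_top]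
  simpa using this

lemma hE_rho (hfm : Measurable fhat) (hfmem : MemLp fhat ⊤ volume) :
    ∀ᵐ z ∂(rho d M), ‖fhat z.1‖ ≤ (eLpNorm fhat ⊤ volume).toReal := by
  set E := (eLpNorm fhat ⊤ volume).toReal
  set bad := {ω : Fin d → ℝ | ¬ ‖fhat ω‖ ≤ E} with hbad
  have hbadm : MeasurableSet bad := by
    have : Measurable fun ω => ‖fhat ω‖ :=
      continuous_norm.measurable.comp hfm
    exact (measurableSet_le this measurable_const).compl
  have hbad0 : volume bad = 0 := ae_iff.mp (hE_vol hfmem)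
  rw [ae_iff]
  have hset : {z : (Fin d → ℝ) × ℝ | ¬ ‖fhat z.1‖ ≤ E} = bad ×ˢ Set.univ := by
    ext z; simp [hbad]
  rw [hset]
  unfold rho
  rw [Measure.prod_prod]
  have : volume.restrict (S1 d M) bad = 0 := by
    rw [Measure.restrict_apply hbadm]
    exact measure_mono_null Set.inter_subset_left hbad0
  rw [this, zero_mul]

lemma hfun_sq_int (hd : 1 ≤ d) (hM : 0 < M) (hfm : Measurable fhat)
    (hfmem : MemLp fhat ⊤ volume)
    (hfint : Integrable (fun ω : Fin d → ℝ => (1 + l1norm ω) * ‖fhat ω‖))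
    (x : Fin d → ℝ) :
    Integrable (fun z => hfun σhat fhat x z ^ 2) (rho d M) := by
  set E := (eLpNorm fhat ⊤ volume).toReal
  apply Integrable.mono' ((base_int_rho hd hM hfm hfint).const_mul
    (((2 * Real.pi * σhat)⁻¹) ^ 2 * 1024 ^ 2 * E))
    ((measurable_hfun σhat hfm x).pow_const 2).aestronglyMeasurable
  filter_upwards [hE_rho hfm hfmem] with z hz
  rw [Real.norm_of_nonneg (sq_nonneg _), ← sq_abs]
  have h1 := hfun_abs_le σhat (fhat := fhat) x z
  have h2 : (0:ℝ) ≤ |hfun σhat fhat x z| := abs_nonneg _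
  have h3 : (0:ℝ) ≤ ‖fhat z.1‖ := norm_nonneg _
  have h4 : (0:ℝ) ≤ |(2 * Real.pi * σhat)⁻¹| := abs_nonneg _
  have h5 : |hfun σhat fhat x z| ^ 2
      ≤ (|(2 * Real.pi * σhat)⁻¹| * 1024 * ‖fhat z.1‖) ^ 2 :=
    pow_le_pow_left₀ h2 h1 2
  have h6 : (|(2 * Real.pi * σhat)⁻¹| * 1024 * ‖fhat z.1‖) ^ 2
      = ((2 * Real.pi * σhat)⁻¹) ^ 2 * 1024 ^ 2 * ‖fhat z.1‖ ^ 2 := by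
    rw [mul_pow, mul_pow, sq_abs]
  have h7 : ‖fhat z.1‖ ^ 2 ≤ E * ‖fhat z.1‖ := by nlinarith
  have h8 : ((2 * Real.pi * σhat)⁻¹) ^ 2 * 1024 ^ 2 * ‖fhat z.1‖ ^ 2
      ≤ ((2 * Real.pi * σhat)⁻¹) ^ 2 * 1024 ^ 2 * (E * ‖fhat z.1‖) :=
    mul_le_mul_of_nonneg_left h7 (by positivity)
  calc |hfun σhat fhat x z| ^ 2
      ≤ ((2 * Real.pi * σhat)⁻¹) ^ 2 * 1024 ^ 2 * (E * ‖fhat z.1‖) := by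
        rw [← h6] at h8; linarith
    _ = ((2 * Real.pi * σhat)⁻¹) ^ 2 * 1024 ^ 2 * E * ‖fhat z.1‖ := by ring

lemma mean_eq (hd : 1 ≤ d) (hM : 0 < M) (hfm : Measurable fhat)
    (hfint : Integrable (fun ω : Fin d → ℝ => (1 + l1norm ω) * ‖fhat ω‖))
    (x : Fin d → ℝ) :
    ∫ z, gfun σhat fhat M x z ∂(nu d M)
      = ∫ ω in S1 d M, ∫ b in S2 M, hfun σhat fhat x (ω, b) := by
  rw [integral_nu_eq hd hM]
  have h1 : ∫ z, gfun σhat fhat M x z ∂(rho d M)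
      = ((Cvol d * M ^ d) * (4 * M)) * ∫ z, hfun σhat fhat x z ∂(rho d M) := by
    simp_rw [gfun_eq_hfun]
    rw [integral_const_mul]
  rw [h1, ← mul_assoc, inv_mul_cancel₀ (ne_of_gt (kappa_pos hd hM)), one_mul]
  haveI := S2_finite hM
  haveI := S1_finite hd hM
  exact integral_prod _ (hfun_int σhat hd hM hfm hfint x)

lemma gfun_int_nu (hd : 1 ≤ d) (hM : 0 < M) (hfm : Measurable fhat)
    (hfint : Integrable (fun ω : Fin d → ℝ => (1 + l1norm ω) * ‖fhat ω‖))
    (x : Fin d → ℝ) :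
    Integrable (gfun σhat fhat M x) (nu d M) := by
  rw [nu_eq hd hM]
  apply Integrable.smul_measure _
    (ENNReal.inv_ne_top.mpr (ne_of_gt (ENNReal.ofReal_pos.mpr (kappa_pos hd hM))))
  have : gfun σhat fhat M x = fun z => ((Cvol d * M ^ d) * (4 * M)) * hfun σhat fhat x z :=
    funext (gfun_eq_hfun σhat x)
  rw [this]
  exact (hfun_int σhat hd hM hfm hfint x).const_mul _

lemma gfun_sq_int_nu (hd : 1 ≤ d) (hM : 0 < M) (hfm : Measurable fhat)
    (hfmem : MemLp fhat ⊤ volume)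
    (hfint : Integrable (fun ω : Fin d → ℝ => (1 + l1norm ω) * ‖fhat ω‖))
    (x : Fin d → ℝ) :
    Integrable (fun z => gfun σhat fhat M x z ^ 2) (nu d M) := by
  rw [nu_eq hd hM]
  apply Integrable.smul_measure _
    (ENNReal.inv_ne_top.mpr (ne_of_gt (ENNReal.ofReal_pos.mpr (kappa_pos hd hM))))
  have : (fun z => gfun σhat fhat M x z ^ 2)
      = fun z => ((Cvol d * M ^ d) * (4 * M)) ^ 2 * hfun σhat fhat x z ^ 2 := by
    funext z; rw [gfun_eq_hfun]; ring
  rw [this]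
  exact (hfun_sq_int σhat hd hM hfm hfmem hfint x).const_mul _

lemma var_le (hd : 1 ≤ d) (hM : 0 < M) (hfm : Measurable fhat)
    (hfmem : MemLp fhat ⊤ volume)
    (hfint : Integrable (fun ω : Fin d → ℝ => (1 + l1norm ω) * ‖fhat ω‖))
    (x : Fin d → ℝ) :
    ∫ z, gfun σhat fhat M x z ^ 2 ∂(nu d M)
      ≤ ((Cvol d * M ^ d) * (4 * M)) * (((2 * Real.pi * σhat)⁻¹) ^ 2
          * (eLpNorm fhat ⊤ volume).toReal
          * (4194304 * ∫ ω, (1 + l1norm ω) * ‖fhat ω‖)) := by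
  haveI := S2_finite hM
  haveI := S1_finite hd hM
  set E := (eLpNorm fhat ⊤ volume).toReal with hEdef
  set I := ∫ ω, (1 + l1norm ω) * ‖fhat ω‖ with hIdef
  set c := (2 * Real.pi * σhat)⁻¹ with hcdef
  set κ := (Cvol d * M ^ d) * (4 * M) with hκdef
  have hE0 : 0 ≤ E := ENNReal.toReal_nonneg
  have hI0 : 0 ≤ I := integral_nonneg fun ω =>
    mul_nonneg (by linarith [l1norm_nonneg ω]) (norm_nonneg _)
  have hκ0 : 0 < κ := kappa_pos hd hM
  -- ψ and its integrability
  set ψ : (Fin d → ℝ) × ℝ → ℝ :=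
    fun z => ‖fhat z.1‖ * act (dotp z.1 x + z.2) ^ 2 with hψdef
  have hψmeas : Measurable ψ := by
    apply Measurable.mul
    · exact (continuous_norm.measurable.comp hfm).comp measurable_fst
    · exact (measurable_actpart x).pow_const 2
  have hψint : Integrable ψ (rho d M) := by
    apply Integrable.mono' ((base_int_rho hd hM hfm hfint).const_mul 1048576)
      hψmeas.aestronglyMeasurable
    apply Filter.Eventually.of_forall
    intro z
    simp only [hψdef]
    have h1 : act (dotp z.1 x + z.2) ^ 2 ≤ 1048576 := by
      have := abs_act_le (dotp z.1 x + z.2)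
      nlinarith [abs_nonneg (act (dotp z.1 x + z.2)), sq_abs (act (dotp z.1 x + z.2))]
    have h3 : (0:ℝ) ≤ ‖fhat z.1‖ := norm_nonneg _
    rw [Real.norm_of_nonneg (by positivity)]
    calc ‖fhat z.1‖ * act (dotp z.1 x + z.2) ^ 2
        ≤ ‖fhat z.1‖ * 1048576 := mul_le_mul_of_nonneg_left h1 h3
      _ = 1048576 * ‖fhat z.1‖ := mul_comm _ _
  -- step 1: ∫ gfun² dν = κ * ∫ hfun² dρ
  have step1 : ∫ z, gfun σhat fhat M x z ^ 2 ∂(nu d M)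
      = κ * ∫ z, hfun σhat fhat x z ^ 2 ∂(rho d M) := by
    rw [integral_nu_eq hd hM]
    have : (fun z => gfun σhat fhat M x z ^ 2)
        = fun z => κ ^ 2 * hfun σhat fhat x z ^ 2 := by
      funext z; rw [gfun_eq_hfun]; ring
    rw [this, integral_const_mul, ← mul_assoc]
    congr 1
    rw [hκdef]
    have hC := (Cvol_pos hd).ne'
    have hM' := hM.ne'
    field_simp
  -- step 2: ∫ hfun² dρ ≤ c² E * ∫ ψ dρ
  have step2 : ∫ z, hfun σhat fhat x z ^ 2 ∂(rho d M) ≤ c ^ 2 * E * ∫ z, ψ z ∂(rho d M) := by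
    rw [← integral_const_mul]
    apply integral_mono_ae (hfun_sq_int σhat hd hM hfm hfmem hfint x)
      (hψint.const_mul _)
    filter_upwards [hE_rho hfm hfmem] with z hz
    have hsq : hfun σhat fhat x z ^ 2
        = c ^ 2 * act (dotp z.1 x + z.2) ^ 2
          * (fhat z.1 * Complex.exp (-(Complex.I * z.2))).re ^ 2 := by
      unfold hfun; rw [← hcdef]; ring
    have h1 := repart_abs_le (fhat := fhat) z
    have h3 : (0:ℝ) ≤ ‖fhat z.1‖ := norm_nonneg _
    have h4 : (fhat z.1 * Complex.exp (-(Complex.I * z.2))).re ^ 2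
        ≤ ‖fhat z.1‖ ^ 2 := by
      rw [← sq_abs]
      exact pow_le_pow_left₀ (abs_nonneg _) h1 2
    rw [hsq]
    simp only [hψdef]
    have h5 : (0:ℝ) ≤ c ^ 2 * act (dotp z.1 x + z.2) ^ 2 := by positivity
    have h6 : ‖fhat z.1‖ ^ 2 ≤ E * ‖fhat z.1‖ := by nlinarith
    calc c ^ 2 * act (dotp z.1 x + z.2) ^ 2
          * (fhat z.1 * Complex.exp (-(Complex.I * z.2))).re ^ 2
        ≤ c ^ 2 * act (dotp z.1 x + z.2) ^ 2 * ‖fhat z.1‖ ^ 2 :=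
          mul_le_mul_of_nonneg_left h4 h5
      _ ≤ c ^ 2 * act (dotp z.1 x + z.2) ^ 2 * (E * ‖fhat z.1‖) :=
          mul_le_mul_of_nonneg_left h6 h5
      _ = c ^ 2 * E * (‖fhat z.1‖ * act (dotp z.1 x + z.2) ^ 2) := by ring
  -- step 3: ∫ ψ dρ ≤ 4194304 * I
  have hS1_le_I : ∫ ω in S1 d M, ‖fhat ω‖ ≤ I := by
    calc ∫ ω in S1 d M, ‖fhat ω‖
        ≤ ∫ ω in S1 d M, (1 + l1norm ω) * ‖fhat ω‖ := by
          apply integral_mono (habs_int_S1 hfm hfint) hfint.integrableOn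
          intro ω
          exact le_mul_of_one_le_left (norm_nonneg _) (by linarith [l1norm_nonneg ω])
      _ ≤ I := setIntegral_le_integral hfint (Filter.Eventually.of_forall fun ω =>
          mul_nonneg (by linarith [l1norm_nonneg ω]) (norm_nonneg _))
  have step3 : ∫ z, ψ z ∂(rho d M) ≤ 4194304 * I := by
    have hiter : ∫ z, ψ z ∂(rho d M) = ∫ ω in S1 d M, ∫ b in S2 M, ψ (ω, b) := by
      unfold rho
      exact integral_prod _ hψint
    rw [hiter]
    calc ∫ ω in S1 d M, ∫ b in S2 M, ψ (ω, b)
        ≤ ∫ ω in S1 d M, ‖fhat ω‖ * 4194304 := by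
          apply integral_mono
          · have := hψint.integral_prod_left
            unfold rho at this
            exact this
          · exact (habs_int_S1 hfm hfint).mul_const _
          intro ω
          have heq : ∫ b in S2 M, ψ (ω, b)
              = ‖fhat ω‖ * ∫ b in S2 M, act (dotp ω x + b) ^ 2 := by
            simp only [hψdef]
            exact integral_const_mul _ _
          show (∫ b in S2 M, ψ (ω, b)) ≤ ‖fhat ω‖ * 4194304
          rw [heq]
          exact mul_le_mul_of_nonneg_left (act_sq_setint_le _ _) (norm_nonneg _)
      _ = (∫ ω in S1 d M, ‖fhat ω‖) * 4194304 := integral_mul_const _ _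
      _ ≤ 4194304 * I := by
          rw [mul_comm]
          exact mul_le_mul_of_nonneg_left hS1_le_I (by norm_num)
  calc ∫ z, gfun σhat fhat M x z ^ 2 ∂(nu d M)
      = κ * ∫ z, hfun σhat fhat x z ^ 2 ∂(rho d M) := step1
    _ ≤ κ * (c ^ 2 * E * ∫ z, ψ z ∂(rho d M)) :=
        mul_le_mul_of_nonneg_left step2 (le_of_lt hκ0)
    _ ≤ κ * (c ^ 2 * E * (4194304 * I)) := by
        apply mul_le_mul_of_nonneg_left _ (le_of_lt hκ0)
        exact mul_le_mul_of_nonneg_left step3 (by positivity)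

end Sample2
section Meas2

variable {d : ℕ} {M : ℝ} (σhat : ℝ) {fhat : (Fin d → ℝ) → ℂ}

lemma exp_meas_cont : Continuous fun b : ℝ => Complex.exp (-(Complex.I * b)) :=
  Complex.continuous_exp.comp ((continuous_const.mul Complex.continuous_ofReal).neg)

lemma f1_measurable (hfm : Measurable fhat) :
    Measurable fun x : Fin d → ℝ =>
      ∫ ω in S1 d M, ∫ b in S2 M, hfun σhat fhat x (ω, b) := by
  have hj : StronglyMeasurable fun p : ((Fin d → ℝ) × (Fin d → ℝ)) × ℝ =>
      hfun σhat fhat p.1.1 (p.1.2, p.2) := by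
    apply Measurable.stronglyMeasurable
    unfold hfun
    apply Measurable.mul
    · apply Measurable.mul measurable_const
      apply act_continuous.measurable.comp
      apply Measurable.add _ measurable_snd
      unfold dotp
      apply Finset.measurable_sum
      intro i _
      exact ((measurable_pi_apply i).comp (measurable_snd.comp measurable_fst)).mul
        ((measurable_pi_apply i).comp (measurable_fst.comp measurable_fst))
    · apply Complex.measurable_re.comp
      apply Measurable.mul (hfm.comp (measurable_snd.comp measurable_fst))
      exact exp_meas_cont.measurable.comp measurable_snd
  have h2 := hj.integral_prod_right' (ν := volume.restrict (S2 M))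
  have h3 := h2.integral_prod_right' (ν := volume.restrict (S1 d M))
  exact h3.measurable

lemma gfun_joint_meas (hfm : Measurable fhat) :
    Measurable fun w : ((Fin d → ℝ) × ℝ) × (Fin d → ℝ) => gfun σhat fhat M w.2 w.1 := by
  unfold gfun
  apply Measurable.mul
  · apply Measurable.mul_const
    apply Measurable.mul measurable_const
    exact (measurable_repart hfm).comp measurable_fst
  · apply act_continuous.measurable.comp
    apply Measurable.add _ (measurable_snd.comp measurable_fst)
    unfold dotp
    apply Finset.measurable_sum
    intro i _
    exact ((measurable_pi_apply i).comp (measurable_fst.comp measurable_fst)).mul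
      ((measurable_pi_apply i).comp measurable_snd)

end Meas2
/-- the Monte-Carlo (`L²(Ω)`) error of the random neural network
approximating the truncated Barron representation `f₁`, with i.i.d. weights
`W₁,…,W_m ∼ P₁`, `B₁,…,B_m ∼ P₂` (all independent) and coefficients
`A_i = (2π σ̂(1))⁻¹ Re(f̂(W_i) e^{-i B_i}) / (p₁(W_i) p₂(B_i))`. -/
theorem stmt_5 (σhat : ℝ)
    (hσhat : (σhat : ℂ) = ∫ t : ℝ, (act t : ℂ) * Complex.exp (-(Complex.I * t)))
    (hσhat0 : σhat ≠ 0) :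
    ∃ C > (0 : ℝ), ∀ (d : ℕ), 1 ≤ d →
      ∀ Ω : Set (Fin d → ℝ), Ω ⊆ {x | ∀ i, x i ∈ Set.Icc (0 : ℝ) 1} → MeasurableSet Ω →
      ∀ M : ℝ, 2 ≤ M → ∀ m : ℕ, 1 ≤ m →
      ∀ fhat : (Fin d → ℝ) → ℂ, Measurable fhat → MemLp fhat ⊤ volume →
      Integrable (fun ω : Fin d → ℝ => (1 + l1norm ω) * ‖fhat ω‖) →
      (∫ p,
          (∫ x in Ω,
            ((∫ ω in {ω : Fin d → ℝ | l1norm ω ≤ M}, ∫ b in {b : ℝ | |b| ≤ 2 * M},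
                (2 * Real.pi * σhat)⁻¹ * act (dotp ω x + b) *
                  (fhat ω * Complex.exp (-(Complex.I * b))).re) -
              (1 / m) * ∑ i : Fin m,
                ((2 * Real.pi * σhat)⁻¹ * (fhat (p.1 i) *
                    Complex.exp (-(Complex.I * p.2 i))).re *
                  ((Cvol d * M ^ d) * (4 * M))) *
                  act (dotp (p.1 i) x + p.2 i)) ^ 2)
          ∂((Measure.pi fun _ : Fin m => P1unif d M).prod
              (Measure.pi fun _ : Fin m => P2unif M)))
        ≤ (C / m) * Cvol d * M ^ (d + 1) * (eLpNorm fhat ⊤ volume).toReal *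
            ∫ ω : Fin d → ℝ, (1 + l1norm ω) * ‖fhat ω‖ := by
  classical
  have hpine : (2 * Real.pi * σhat) ≠ 0 :=
    mul_ne_zero (mul_ne_zero two_ne_zero Real.pi_ne_zero) hσhat0
  have hcne : ((2 * Real.pi * σhat)⁻¹) ≠ 0 := inv_ne_zero hpine
  have hc2pos : (0:ℝ) < ((2 * Real.pi * σhat)⁻¹) ^ 2 :=
    lt_of_le_of_ne (sq_nonneg _) (Ne.symm (pow_ne_zero 2 hcne))
  refine ⟨16777216 * ((2 * Real.pi * σhat)⁻¹) ^ 2, mul_pos (by norm_num) hc2pos, ?_⟩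
  intro d hd Ω hΩsub hΩmeas M hM m hm fhat hfm hfmem hfint
  have hM0 : (0:ℝ) < M := by linarith
  have hm0 : (0:ℝ) < m := by exact_mod_cast Nat.lt_of_lt_of_le Nat.zero_lt_one hm
  haveI hP1 : IsProbabilityMeasure (P1unif d M) := P1unif_prob hd hM0
  haveI hP2 : IsProbabilityMeasure (P2unif M) := P2unif_prob hM0
  haveI hPnu : IsProbabilityMeasure (nu d M) := by unfold nu; infer_instance
  set E := (eLpNorm fhat ⊤ volume).toReal with hEdef
  set I := ∫ ω : Fin d → ℝ, (1 + l1norm ω) * ‖fhat ω‖ with hIdef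
  have hE0 : 0 ≤ E := ENNReal.toReal_nonneg
  have hI0 : 0 ≤ I := integral_nonneg fun ω =>
    mul_nonneg (by linarith [l1norm_nonneg ω]) (norm_nonneg _)
  set B := (16777216 * ((2 * Real.pi * σhat)⁻¹) ^ 2) / m * Cvol d * M ^ (d + 1) * E * I
    with hBdef
  have hB0 : 0 ≤ B := by
    have hCv := Cvol_pos hd
    have : (0:ℝ) ≤ (16777216 * ((2 * Real.pi * σhat)⁻¹) ^ 2) / m :=
      le_of_lt (div_pos (mul_pos (by norm_num) hc2pos) hm0)
    positivity
  set π := Measure.pi fun _ : Fin m => nu d M with hπ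
  set f1 : (Fin d → ℝ) → ℝ :=
    fun x => ∫ ω in S1 d M, ∫ b in S2 M, hfun σhat fhat x (ω, b) with hf1
  -- per-x Monte-Carlo bound
  have hx : ∀ x : Fin d → ℝ,
      Integrable (fun q : Fin m → (Fin d → ℝ) × ℝ =>
        (f1 x - (1/(m:ℝ)) * ∑ i : Fin m, gfun σhat fhat M x (q i)) ^ 2) π ∧
      ∫ q, (f1 x - (1/(m:ℝ)) * ∑ i : Fin m, gfun σhat fhat M x (q i)) ^ 2 ∂π ≤ B := by
    intro x
    have hmc := mc_key (ν := nu d M) (g := gfun σhat fhat M x)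
      (measurable_gfun σhat hfm x) (gfun_int_nu σhat hd hM0 hfm hfint x)
      (gfun_sq_int_nu σhat hd hM0 hfm hfmem hfint x) hm
    rw [mean_eq σhat hd hM0 hfm hfint x] at hmc

    refine ⟨hmc.1, le_trans hmc.2 ?_⟩
    have hvar := var_le σhat hd hM0 hfm hfmem hfint x
    rw [← hEdef, ← hIdef] at hvar
    have harith : (1/(m:ℝ)) * (((Cvol d * M ^ d) * (4 * M)) *
        (((2 * Real.pi * σhat)⁻¹) ^ 2 * E * (4194304 * I))) = B := by
      rw [hBdef, pow_succ]
      field_simp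
      ring
    calc (1/(m:ℝ)) * ∫ y, gfun σhat fhat M x y ^ 2 ∂(nu d M)
        ≤ (1/(m:ℝ)) * (((Cvol d * M ^ d) * (4 * M)) *
            (((2 * Real.pi * σhat)⁻¹) ^ 2 * E * (4194304 * I))) :=
          mul_le_mul_of_nonneg_left hvar (by positivity)
      _ = B := harith
  -- joint measurability
  have hGmeas : Measurable fun s : (Fin m → (Fin d → ℝ) × ℝ) × (Fin d → ℝ) =>
      (f1 s.2 - (1/(m:ℝ)) * ∑ i : Fin m, gfun σhat fhat M s.2 (s.1 i)) ^ 2 := by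
    apply Measurable.pow_const
    apply Measurable.sub
    · exact (f1_measurable σhat hfm).comp measurable_snd
    · apply Measurable.const_mul
      apply Finset.measurable_sum
      intro i _
      have hmap : Measurable fun s : (Fin m → (Fin d → ℝ) × ℝ) × (Fin d → ℝ) =>
          (s.1 i, s.2) :=
        ((measurable_pi_apply i).comp measurable_fst).prodMk measurable_snd
      exact (gfun_joint_meas σhat hfm).comp hmap
  -- volume of Ω at most 1
  have hvolΩ : volume Ω ≤ 1 := by
    have hcube : volume {x : Fin d → ℝ | ∀ i, x i ∈ Set.Icc (0:ℝ) 1} = 1 := by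
      have hset : {x : Fin d → ℝ | ∀ i, x i ∈ Set.Icc (0:ℝ) 1}
          = Set.pi Set.univ fun _ => Set.Icc (0:ℝ) 1 := by
        ext x; simp [Pi.le_def, forall_and]
      rw [hset, volume_pi_pi]
      simp [Real.volume_Icc]
    calc volume Ω ≤ volume {x : Fin d → ℝ | ∀ i, x i ∈ Set.Icc (0:ℝ) 1} :=
          measure_mono hΩsub
      _ = 1 := hcube
  -- key bound over the sample space
  have key : ∫ q, (∫ x in Ω, (f1 x - (1/(m:ℝ)) *
        ∑ i : Fin m, gfun σhat fhat M x (q i)) ^ 2) ∂π ≤ B := by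
    have hlin : ∫⁻ q, ENNReal.ofReal (∫ x in Ω, (f1 x - (1/(m:ℝ)) *
        ∑ i : Fin m, gfun σhat fhat M x (q i)) ^ 2) ∂π ≤ ENNReal.ofReal B := by
      have hswap : ∫⁻ q, (∫⁻ x, ENNReal.ofReal ((f1 x - (1/(m:ℝ)) *
            ∑ i : Fin m, gfun σhat fhat M x (q i)) ^ 2) ∂(volume.restrict Ω)) ∂π
          = ∫⁻ x, (∫⁻ q, ENNReal.ofReal ((f1 x - (1/(m:ℝ)) *
            ∑ i : Fin m, gfun σhat fhat M x (q i)) ^ 2) ∂π) ∂(volume.restrict Ω) := by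
        haveI : SFinite π := by
          rw [hπ]
          haveI : SigmaFinite (nu d M) := inferInstance
          infer_instance
        apply lintegral_lintegral_swap
        exact hGmeas.ennreal_ofReal.aemeasurable
      calc ∫⁻ q, ENNReal.ofReal (∫ x in Ω, (f1 x - (1/(m:ℝ)) *
            ∑ i : Fin m, gfun σhat fhat M x (q i)) ^ 2) ∂π
          ≤ ∫⁻ q, (∫⁻ x, ENNReal.ofReal ((f1 x - (1/(m:ℝ)) *
              ∑ i : Fin m, gfun σhat fhat M x (q i)) ^ 2) ∂(volume.restrict Ω)) ∂π :=
            lintegral_mono fun q => helper_ofReal_integral_le _ _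
              (Filter.Eventually.of_forall fun x => sq_nonneg _)
        _ = ∫⁻ x, (∫⁻ q, ENNReal.ofReal ((f1 x - (1/(m:ℝ)) *
              ∑ i : Fin m, gfun σhat fhat M x (q i)) ^ 2) ∂π) ∂(volume.restrict Ω) := hswap
        _ ≤ ∫⁻ _x, ENNReal.ofReal B ∂(volume.restrict Ω) :=
            lintegral_mono fun x => le_trans
              (le_of_eq (ofReal_integral_eq_lintegral_ofReal (hx x).1
                (Filter.Eventually.of_forall fun q => sq_nonneg _)).symm)
              (ENNReal.ofReal_le_ofReal (hx x).2)
        _ ≤ ENNReal.ofReal B := by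
            rw [lintegral_const, Measure.restrict_apply_univ]
            calc ENNReal.ofReal B * volume Ω ≤ ENNReal.ofReal B * 1 :=
                  mul_le_mul_right hvolΩ _
              _ = ENNReal.ofReal B := mul_one _
    calc ∫ q, (∫ x in Ω, (f1 x - (1/(m:ℝ)) *
          ∑ i : Fin m, gfun σhat fhat M x (q i)) ^ 2) ∂π
        ≤ (∫⁻ q, ENNReal.ofReal (∫ x in Ω, (f1 x - (1/(m:ℝ)) *
            ∑ i : Fin m, gfun σhat fhat M x (q i)) ^ 2) ∂π).toReal :=
          helper_integral_le_toReal _ _ (Filter.Eventually.of_forall fun q =>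
            integral_nonneg fun x => sq_nonneg _)
      _ ≤ (ENNReal.ofReal B).toReal := ENNReal.toReal_mono ENNReal.ofReal_ne_top hlin
      _ = B := ENNReal.toReal_ofReal hB0
  -- transfer along the product/pi exchange
  set T := MeasurableEquiv.arrowProdEquivProdArrow (Fin d → ℝ) ℝ (Fin m) with hT
  have hTmp : MeasurePreserving T (Measure.pi fun _ : Fin m => nu d M)
      ((Measure.pi fun _ : Fin m => P1unif d M).prod
        (Measure.pi fun _ : Fin m => P2unif M)) :=
    measurePreserving_arrowProdEquivProdArrow _ _ _ _ _
  have htrans := hTmp.integral_comp T.measurableEmbedding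
    (fun p : (Fin m → Fin d → ℝ) × (Fin m → ℝ) =>
      ∫ x in Ω,
        ((∫ ω in {ω : Fin d → ℝ | l1norm ω ≤ M}, ∫ b in {b : ℝ | |b| ≤ 2 * M},
            (2 * Real.pi * σhat)⁻¹ * act (dotp ω x + b) *
              (fhat ω * Complex.exp (-(Complex.I * b))).re) -
          (1 / m) * ∑ i : Fin m,
            ((2 * Real.pi * σhat)⁻¹ * (fhat (p.1 i) *
                Complex.exp (-(Complex.I * p.2 i))).re *
              ((Cvol d * M ^ d) * (4 * M))) *
              act (dotp (p.1 i) x + p.2 i)) ^ 2)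
  rw [← htrans]
  exact key
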